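/- Let V ⊆ U ⊆ A₀, and suppose that for every continuous linear functional λ on A (represented as λ(f) = (f*g)(1) for some g analytic on the closed unit disk), the value g(0) lies in λ(V). Then the following are equivalent: (a) λ(U) = λ(V) for all such λ; (b) for all such λ, 0 ∉ λ(V) implies 0 ∉ λ(U); (c) U^T = V^T. -/

import Mathlib

open Metric Set Filter

noncomputable def coeff (f : ℂ → ℂ) (k : ℕ) : ℂ := iteratedDeriv k f 0 / (k.factorial : ℂ)

noncomputable def hadamard (f g : ℂ → ℂ) : ℂ → ℂ := fun z => ∑' k : ℕ, coeff f k * coeff g k * z ^ k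

def Pt (x : ℂ) (f : ℂ → ℂ) : ℂ → ℂ := fun z => f (x * z)

def A0 : Set (ℂ → ℂ) := {f | AnalyticOnNhd ℂ f (ball (0:ℂ) 1) ∧ f 0 = 1}

def cm (V : Set (ℂ → ℂ)) : Set (ℂ → ℂ) := {h | ∃ f ∈ V, ∃ x : ℂ, ‖x‖ ≤ 1 ∧ h = Pt x f}

def dual (V : Set (ℂ → ℂ)) : Set (ℂ → ℂ) :=
  {g ∈ A0 | ∀ f ∈ V, ∀ z ∈ ball (0:ℂ) 1, hadamard f g z ≠ 0}

def eligible (g : ℂ → ℂ) : Prop := ∃ R > 1, AnalyticOnNhd ℂ g (ball (0:ℂ) R)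

def VT (V : Set (ℂ → ℂ)) : Set (ℂ → ℂ) :=
  {g | eligible g ∧ g 0 = 1 ∧ ∀ f ∈ V, hadamard f g 1 ≠ 0}

def perp (U : Set (ℂ → ℂ)) : Set (ℂ → ℂ) :=
  {h ∈ A0 | ∀ g ∈ U, hadamard g h 1 ≠ 0}

def lamSet (g : ℂ → ℂ) (V : Set (ℂ → ℂ)) : Set ℂ := (fun f => hadamard f g 1) '' V

def S (R : ℝ) : Set (Set ℂ) := {K | K ⊆ ball (0:ℂ) R ∧ IsCompact K}

noncomputable def closLU (R : ℝ) (U : Set (ℂ → ℂ)) : Set (ℂ → ℂ) :=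
  (UniformOnFun.toFun (S R)) '' closure ((UniformOnFun.ofFun (S R)) '' U)

/-! ### Auxiliary lemmas -/

lemma coeff_eq' {f : ℂ → ℂ} {p : FormalMultilinearSeries ℂ ℂ ℂ}
    (hp : HasFPowerSeriesAt f p 0) (k : ℕ) : coeff f k = p.coeff k := by
  obtain ⟨r, h⟩ := hp
  have h1 := h.factorial_smul (1:ℂ) k
  have h2 : (p k fun _ ↦ (1:ℂ)) = p.coeff k := by
    rw [FormalMultilinearSeries.apply_eq_pow_smul_coeff, one_pow, one_smul]
  rw [coeff, iteratedDeriv_eq_iteratedFDeriv, ← h1, h2, nsmul_eq_mul,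
    mul_div_cancel_left₀ _ (Nat.cast_ne_zero.mpr k.factorial_ne_zero : (k.factorial:ℂ) ≠ 0)]

lemma exists_coeff_bound {f : ℂ → ℂ} {R s : ℝ} (hf : AnalyticOnNhd ℂ f (ball 0 R))
    (hs : 0 ≤ s) (hsR : s < R) : ∃ C, ∀ k, ‖coeff f k‖ * s ^ k ≤ C := by
  set t : ℝ := (s + R) / 2 with ht
  have hst : s < t := by rw [ht]; linarith
  have htR : t < R := by rw [ht]; linarith
  have ht0 : 0 < t := lt_of_le_of_lt hs hst
  have hsub : closedBall (0:ℂ) t.toNNReal ⊆ ball 0 R := by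
    intro z hz
    simp only [mem_closedBall, mem_ball] at *
    calc dist z 0 ≤ (t.toNNReal : ℝ) := hz
    _ = t := by rw [Real.coe_toNNReal _ ht0.le]
    _ < R := htR
  have hd : DifferentiableOn ℂ f (closedBall (0:ℂ) t.toNNReal) :=
    (hf.differentiableOn).mono hsub
  have hball := hd.hasFPowerSeriesOnBall (by simpa using ht0 : (0:NNReal) < t.toNNReal)
  have hlt : (s.toNNReal : ENNReal) < (cauchyPowerSeries f 0 t.toNNReal).radius := by
    refine lt_of_lt_of_le ?_ hball.r_le
    rw [ENNReal.coe_lt_coe]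
    exact_mod_cast (by rw [Real.toNNReal_lt_toNNReal_iff ht0]; exact hst :
      s.toNNReal < t.toNNReal)
  obtain ⟨C, _, hC⟩ := (cauchyPowerSeries f 0 t.toNNReal).norm_mul_pow_le_of_lt_radius hlt
  refine ⟨C, fun k => ?_⟩
  have := hC k
  rw [FormalMultilinearSeries.norm_apply_eq_norm_coef] at this
  rw [coeff_eq' hball.hasFPowerSeriesAt k]
  calc ‖(cauchyPowerSeries f 0 t.toNNReal).coeff k‖ * s ^ k
      = ‖(cauchyPowerSeries f 0 t.toNNReal).coeff k‖ * (s.toNNReal:ℝ) ^ k := by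
        rw [Real.coe_toNNReal _ hs]
    _ ≤ C := this

lemma hadamard_summable {f g : ℂ → ℂ} (hf : AnalyticOnNhd ℂ f (ball 0 1))
    (hg : eligible g) : Summable (fun k : ℕ => coeff f k * coeff g k) := by
  obtain ⟨R, hR, hga⟩ := hg
  set r : ℝ := (1 + R) / 2 with hr
  have hr1 : 1 < r := by rw [hr]; linarith
  have hr0 : 0 < r := by linarith
  set σ : ℝ := (1 + 1 / r) / 2 with hσ
  have hσ1 : σ < 1 := by
    have : 1 / r < 1 := by rw [div_lt_one hr0]; exact hr1
    rw [hσ]; linarith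
  have hσ0 : 0 < σ := by
    have : 0 < 1 / r := by positivity
    rw [hσ]; linarith
  have hσr : 1 < σ * r := by
    have h1 : 1 / r < σ := by
      have : 1 / r < 1 := by rw [div_lt_one hr0]; exact hr1
      rw [hσ]; linarith
    calc 1 = (1 / r) * r := by field_simp
    _ < σ * r := by apply mul_lt_mul_of_pos_right h1 hr0
  obtain ⟨C1, hC1⟩ := exists_coeff_bound hf hσ0.le hσ1
  obtain ⟨C2, hC2⟩ := exists_coeff_bound hga hr0.le (by rw [hr]; linarith)
  have hC1' : 0 ≤ C1 := le_trans (by positivity) (hC1 0)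
  have hC2' : 0 ≤ C2 := le_trans (by positivity) (hC2 0)
  set q : ℝ := (σ * r)⁻¹ with hq
  have hq0 : 0 ≤ q := by positivity
  have hq1 : q < 1 := by rw [hq, inv_lt_one_iff₀]; right; exact hσr
  apply Summable.of_norm_bounded (g := fun k => (C1 * C2) * q ^ k)
    (Summable.mul_left _ (summable_geometric_of_lt_one hq0 hq1))
  intro k
  have key : ‖coeff f k * coeff g k‖ * (σ * r) ^ k ≤ C1 * C2 := by
    rw [norm_mul, mul_pow]
    calc ‖coeff f k‖ * ‖coeff g k‖ * (σ ^ k * r ^ k)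
        = (‖coeff f k‖ * σ ^ k) * (‖coeff g k‖ * r ^ k) := by ring
      _ ≤ C1 * C2 := mul_le_mul (hC1 k) (hC2 k) (by positivity) hC1'
  calc ‖coeff f k * coeff g k‖ = ‖coeff f k * coeff g k‖ * (σ * r) ^ k * ((σ * r) ^ k)⁻¹ := by
        field_simp
    _ ≤ (C1 * C2) * ((σ * r) ^ k)⁻¹ := by
        apply mul_le_mul_of_nonneg_right key (by positivity)
    _ = (C1 * C2) * q ^ k := by rw [hq, inv_pow]

lemma coeff_zero_A0 {f : ℂ → ℂ} (hf : f ∈ A0) : coeff f 0 = 1 := by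
  simp [coeff, iteratedDeriv_zero, hf.2]

lemma hadamard_one (f g : ℂ → ℂ) : hadamard f g 1 = ∑' k, coeff f k * coeff g k := by
  simp [hadamard]

lemma eligible_analyticAt {g : ℂ → ℂ} (hg : eligible g) : AnalyticAt ℂ g 0 := by
  obtain ⟨R, hR, hga⟩ := hg
  exact hga 0 (by simp; linarith)

lemma coeff_sub_const {g : ℂ → ℂ} (hg : eligible g) (c : ℂ) (k : ℕ) :
    coeff (fun z => g z - c) k = coeff g k - (if k = 0 then c else 0) := by
  obtain ⟨p, hp⟩ := eligible_analyticAt hg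
  have hsub : HasFPowerSeriesAt (fun z => g z - c)
      (p - constFormalMultilinearSeries ℂ ℂ c) 0 := hp.sub hasFPowerSeriesAt_const
  rw [coeff_eq' hsub, coeff_eq' hp]
  show (p - constFormalMultilinearSeries ℂ ℂ c) k 1 = p k 1 - _
  rw [show (p - constFormalMultilinearSeries ℂ ℂ c) k = p k - constFormalMultilinearSeries ℂ ℂ c k from rfl,
    ContinuousMultilinearMap.sub_apply]
  congr 1
  rcases Nat.eq_zero_or_pos k with h | h
  · subst h; simp [constFormalMultilinearSeries]
  · rw [if_neg h.ne', constFormalMultilinearSeries_apply_of_nonzero h.ne']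
    rfl

lemma coeff_const_mul {g : ℂ → ℂ} (hg : eligible g) (c : ℂ) (k : ℕ) :
    coeff (fun z => c * g z) k = c * coeff g k := by
  obtain ⟨p, hp⟩ := eligible_analyticAt hg
  obtain ⟨r, hball⟩ := hp
  have hcomp := (ContinuousLinearMap.mul ℂ ℂ c).comp_hasFPowerSeriesOnBall hball
  have : HasFPowerSeriesAt (fun z => c * g z)
      ((ContinuousLinearMap.mul ℂ ℂ c).compFormalMultilinearSeries p) 0 := by
    refine ⟨r, ?_⟩
    convert hcomp using 1
    funext z; simp
  rw [coeff_eq' this, coeff_eq' ⟨r, hball⟩]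
  rw [FormalMultilinearSeries.coeff, FormalMultilinearSeries.coeff,
    ContinuousLinearMap.compFormalMultilinearSeries_apply']
  simp [ContinuousLinearMap.mul_apply']

lemma eligible_sub_const {g : ℂ → ℂ} (hg : eligible g) (c : ℂ) :
    eligible (fun z => g z - c) := by
  obtain ⟨R, hR, hga⟩ := hg
  exact ⟨R, hR, hga.sub analyticOnNhd_const⟩

lemma eligible_const_mul {g : ℂ → ℂ} (hg : eligible g) (c : ℂ) :
    eligible (fun z => c * g z) := by
  obtain ⟨R, hR, hga⟩ := hg
  exact ⟨R, hR, analyticOnNhd_const.mul hga⟩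

lemma hadamard_sub_const {f g : ℂ → ℂ} (hf : f ∈ A0) (hg : eligible g) (c : ℂ) :
    hadamard f (fun z => g z - c) 1 = hadamard f g 1 - c := by
  rw [hadamard_one, hadamard_one]
  have heq : (fun k : ℕ => coeff f k * coeff (fun z => g z - c) k)
      = fun k : ℕ => coeff f k * coeff g k - (if k = 0 then c else 0) := by
    funext k
    rw [coeff_sub_const hg, mul_sub]
    congr 1
    rcases Nat.eq_zero_or_pos k with h | h
    · subst h; simp [coeff_zero_A0 hf]
    · simp [h.ne']
  rw [heq, Summable.tsum_sub (hadamard_summable hf.1 hg)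
    (summable_of_ne_finset_zero (s := {0}) (by intro k hk; simp at hk; simp [hk]))]
  congr 1
  exact tsum_ite_eq 0 (fun _ => c)

lemma hadamard_const_mul {f g : ℂ → ℂ} (hg : eligible g) (c : ℂ) :
    hadamard f (fun z => c * g z) 1 = c * hadamard f g 1 := by
  rw [hadamard_one, hadamard_one, ← tsum_mul_left]
  congr 1; funext k
  rw [coeff_const_mul hg]; ring

theorem stmt11 (U V : Set (ℂ → ℂ)) (hVU : V ⊆ U) (hU : U ⊆ A0)
    (h0 : ∀ g : ℂ → ℂ, eligible g → g 0 ∈ lamSet g V) :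
    ((∀ g : ℂ → ℂ, eligible g → lamSet g U = lamSet g V) ↔
      (∀ g : ℂ → ℂ, eligible g → (0:ℂ) ∉ lamSet g V → (0:ℂ) ∉ lamSet g U)) ∧
    ((∀ g : ℂ → ℂ, eligible g → (0:ℂ) ∉ lamSet g V → (0:ℂ) ∉ lamSet g U) ↔
      VT U = VT V) := by
  constructor
  · constructor
    · intro ha g hg hV
      rw [ha g hg]; exact hV
    · intro hb g hg
      refine Subset.antisymm ?_ (image_mono hVU)
      rintro c ⟨f, hf, rfl⟩
      set c := hadamard f g 1 with hc
      have hg'e := eligible_sub_const hg c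
      have h0U : (0:ℂ) ∈ lamSet (fun z => g z - c) U :=
        ⟨f, hf, by show hadamard f (fun z => g z - c) 1 = 0
                   rw [hadamard_sub_const (hU hf) hg]; ring⟩
      have h0V : (0:ℂ) ∈ lamSet (fun z => g z - c) V := by
        by_contra h
        exact hb _ hg'e h h0U
      obtain ⟨f', hf', hval⟩ := h0V
      refine ⟨f', hf', ?_⟩
      simp only at hval
      rw [hadamard_sub_const (hU (hVU hf')) hg] at hval
      exact sub_eq_zero.mp hval
  · constructor
    · intro hb
      ext g
      simp only [VT, mem_setOf_eq]
      constructor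
      · rintro ⟨he, h1, hU'⟩
        exact ⟨he, h1, fun f hf => hU' f (hVU hf)⟩
      · rintro ⟨he, h1, hV'⟩
        refine ⟨he, h1, fun f hf hzero => ?_⟩
        have h0V : (0:ℂ) ∉ lamSet g V := by
          rintro ⟨f', hf', hv⟩
          exact hV' f' hf' hv
        exact hb g he h0V ⟨f, hf, hzero⟩
    · rintro hVT g hg hV ⟨f, hf, hzero⟩
      have hg0 : g 0 ≠ 0 := by
        intro h
        apply hV
        have := h0 g hg
        rwa [h] at this
      have hg'e := eligible_const_mul hg (g 0)⁻¹
      have hmem : (fun z => (g 0)⁻¹ * g z) ∈ VT V := by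
        refine ⟨hg'e, inv_mul_cancel₀ hg0, fun f' hf' => ?_⟩
        rw [hadamard_const_mul hg]
        exact mul_ne_zero (inv_ne_zero hg0) (fun h => hV ⟨f', hf', h⟩)
      rw [← hVT] at hmem
      apply hmem.2.2 f hf
      simp only at hzero
      rw [hadamard_const_mul hg, hzero, mul_zero]
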